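/- For a complex n×n matrix A (n ≥ 2), let M(A) be the (n choose 2)×(n choose 2) matrix indexed by pairs (i,j) with i < j and (r,s) with r < s, with entries M(A)_{(i,j),(r,s)} := δ_{ir} A_{js} + δ_{js} A_{ir} − δ_{is} A_{jr} − δ_{jr} A_{is}. If λ₁, …, λₙ is an enumeration (with multiplicity) of the roots of the characteristic polynomial of A, then det(M(A)) = ∏_{1≤i<j≤n} (λᵢ + λⱼ). -/

import Mathlib

open Matrix

/-- The bialternate sum of `A` with itself (equivalently, the second additive
compound of `A`): the `(n choose 2) × (n choose 2)` matrix indexed by pairs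
`i < j` and `r < s` with entries
`δ_{ir} A_{js} + δ_{js} A_{ir} − δ_{is} A_{jr} − δ_{jr} A_{is}`. -/
def bialternateSum {n : ℕ} {R : Type*} [Ring R] (A : Matrix (Fin n) (Fin n) R) :
    Matrix {p : Fin n × Fin n // p.1 < p.2} {p : Fin n × Fin n // p.1 < p.2} R :=
  fun p q =>
    (if p.val.1 = q.val.1 then A p.val.2 q.val.2 else 0) +
      (if p.val.2 = q.val.2 then A p.val.1 q.val.1 else 0) -
      (if p.val.1 = q.val.2 then A p.val.2 q.val.1 else 0) -
      (if p.val.2 = q.val.1 then A p.val.1 q.val.2 else 0)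

section Compound
open Finset

variable {n : ℕ} {R : Type*} [CommRing R]

/-- second multiplicative compound -/
def cmp2 (A : Matrix (Fin n) (Fin n) R) :
    Matrix {p : Fin n × Fin n // p.1 < p.2} {p : Fin n × Fin n // p.1 < p.2} R :=
  fun p q => A p.val.1 q.val.1 * A p.val.2 q.val.2 - A p.val.1 q.val.2 * A p.val.2 q.val.1

lemma cmp2_one : cmp2 (1 : Matrix (Fin n) (Fin n) R) = 1 := by
  ext p q
  obtain ⟨⟨i, j⟩, hij⟩ := p
  obtain ⟨⟨r, s⟩, hrs⟩ := q
  simp only [cmp2, one_apply, Subtype.mk.injEq, Prod.mk.injEq]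
  split_ifs <;> simp_all <;> omega

lemma cmp2_mul (X Y : Matrix (Fin n) (Fin n) R) : cmp2 (X * Y) = cmp2 X * cmp2 Y := by
  ext p q
  obtain ⟨⟨i, j⟩, hij⟩ := p
  obtain ⟨⟨r, s⟩, hrs⟩ := q
  set g : Fin n × Fin n → R := fun ab =>
    X i ab.1 * X j ab.2 * (Y ab.1 r * Y ab.2 s - Y ab.1 s * Y ab.2 r) with hg
  have h1 : cmp2 (X * Y) ⟨(i, j), hij⟩ ⟨(r, s), hrs⟩ = ∑ ab : Fin n × Fin n, g ab := by
    simp only [cmp2, Matrix.mul_apply, Finset.sum_mul_sum, Fintype.sum_prod_type,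
      ← Finset.sum_sub_distrib]
    refine Finset.sum_congr rfl fun a _ => Finset.sum_congr rfl fun b _ => ?_
    simp only [hg]; ring
  rw [h1, Matrix.mul_apply]
  -- split the sum over all pairs
  rw [← Finset.sum_filter_add_sum_filter_not Finset.univ (fun ab : Fin n × Fin n => ab.1 < ab.2)]
  rw [← Finset.sum_filter_add_sum_filter_not
    (Finset.univ.filter (fun ab : Fin n × Fin n => ¬ ab.1 < ab.2))
    (fun ab : Fin n × Fin n => ab.2 < ab.1)]
  have hdiag : ∑ ab ∈ (Finset.univ.filter (fun ab : Fin n × Fin n => ¬ ab.1 < ab.2)).filter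
      (fun ab : Fin n × Fin n => ¬ ab.2 < ab.1), g ab = 0 := by
    refine Finset.sum_eq_zero fun ab hab => ?_
    simp only [Finset.mem_filter] at hab
    have : ab.1 = ab.2 := le_antisymm (not_lt.mp hab.2) (not_lt.mp hab.1.2)
    simp only [hg, this]; ring
  have hswap : ∑ ab ∈ (Finset.univ.filter (fun ab : Fin n × Fin n => ¬ ab.1 < ab.2)).filter
      (fun ab : Fin n × Fin n => ab.2 < ab.1), g ab
      = ∑ ab ∈ Finset.univ.filter (fun ab : Fin n × Fin n => ab.1 < ab.2), g ab.swap := by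
    refine Finset.sum_nbij' (fun ab => ab.swap) (fun ab => ab.swap) ?_ ?_ ?_ ?_ ?_ <;>
      simp +contextual [Prod.swap, le_of_lt, not_lt, Prod.ext_iff]
  rw [hdiag, hswap, add_zero, ← Finset.sum_add_distrib]
  rw [Finset.sum_subtype (Finset.univ.filter (fun ab : Fin n × Fin n => ab.1 < ab.2))
    (p := fun ab : Fin n × Fin n => ab.1 < ab.2) (by simp)
    (f := fun ab => g ab + g ab.swap)]
  refine Finset.sum_congr rfl fun ab _ => ?_
  simp only [hg, cmp2, Prod.swap]; ring

lemma bialternateSum_eq (A : Matrix (Fin n) (Fin n) R) :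
    bialternateSum A = cmp2 (1 + A) - cmp2 1 - cmp2 A := by
  ext p q
  obtain ⟨⟨i, j⟩, hij⟩ := p
  obtain ⟨⟨r, s⟩, hrs⟩ := q
  simp only [bialternateSum, cmp2, Matrix.sub_apply, Matrix.add_apply, one_apply]
  split_ifs <;> ring

lemma det_bialternateSum_conj (X Y A : Matrix (Fin n) (Fin n) R)
    (hXY : X * Y = 1) (hYX : Y * X = 1) :
    (bialternateSum (X * A * Y)).det = (bialternateSum A).det := by
  have key : bialternateSum (X * A * Y) = cmp2 X * bialternateSum A * cmp2 Y := by
    rw [bialternateSum_eq, bialternateSum_eq]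
    have h1 : (1 : Matrix (Fin n) (Fin n) R) + X * A * Y = X * (1 + A) * Y := by
      rw [Matrix.mul_add, Matrix.add_mul, Matrix.mul_one, hXY]
    have h2 : (1 : Matrix (Fin n) (Fin n) R) = X * 1 * Y := by rw [Matrix.mul_one, hXY]
    have e1 : cmp2 ((1 : Matrix (Fin n) (Fin n) R) + X * (A * Y))
        = cmp2 X * (cmp2 (1 + A) * cmp2 Y) := by
      rw [← Matrix.mul_assoc X A Y, h1, Matrix.mul_assoc, cmp2_mul, cmp2_mul]
    have e2 : cmp2 (1 : Matrix (Fin n) (Fin n) R) = cmp2 X * (cmp2 1 * cmp2 Y) := by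
      nth_rewrite 1 [h2]; rw [Matrix.mul_assoc, cmp2_mul, cmp2_mul]
    have e3 : cmp2 (X * (A * Y)) = cmp2 X * (cmp2 A * cmp2 Y) := by
      rw [cmp2_mul, cmp2_mul]
    simp only [Matrix.mul_sub, Matrix.sub_mul, Matrix.mul_assoc]
    rw [e1, e3]
    nth_rewrite 1 [e2]
    rfl
  have hdet : (cmp2 X).det * (cmp2 Y).det = 1 := by
    rw [← Matrix.det_mul, ← cmp2_mul, hXY, cmp2_one, Matrix.det_one]
  rw [key, Matrix.det_mul, Matrix.det_mul]
  rw [mul_comm ((cmp2 X).det), mul_assoc, hdet, mul_one]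

def pidx {n : ℕ} (p : {p : Fin n × Fin n // p.1 < p.2}) : ℕ := p.val.1 * n + p.val.2

lemma pidx_lex {n : ℕ} {p q : {p : Fin n × Fin n // p.1 < p.2}} (h : pidx q < pidx p) :
    (q.val.1 : ℕ) < p.val.1 ∨ ((q.val.1 : ℕ) = p.val.1 ∧ (q.val.2 : ℕ) < p.val.2) := by
  obtain ⟨⟨i, j⟩, hij⟩ := p
  obtain ⟨⟨r, s⟩, hrs⟩ := q
  simp only [pidx] at h ⊢
  have hjn := j.is_lt; have hsn := s.is_lt
  rcases Nat.lt_or_ge (r : ℕ) i with hc | hc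
  · exact Or.inl hc
  · right
    have hri : (r : ℕ) = i := by nlinarith
    refine ⟨hri, ?_⟩
    rw [hri] at h; omega

lemma pidx_inj {n : ℕ} : Function.Injective (pidx (n := n)) := by
  intro p q h
  obtain ⟨⟨i, j⟩, hij⟩ := p
  obtain ⟨⟨r, s⟩, hrs⟩ := q
  simp only [pidx] at h
  have h1 := j.is_lt; have h2 := s.is_lt
  have hir : (i : ℕ) = r := by
    rcases Nat.lt_or_ge (i : ℕ) r with hc | hc
    · nlinarith
    · rcases Nat.lt_or_ge (r : ℕ) i with hc2 | hc2
      · nlinarith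
      · omega
  rw [hir] at h
  have : (j : ℕ) = s := by omega
  simp only [Subtype.mk.injEq, Prod.mk.injEq]
  exact ⟨Fin.ext hir, Fin.ext this⟩

lemma bialt_triangular (T : Matrix (Fin n) (Fin n) R) (hT : T.BlockTriangular id) :
    (bialternateSum T).BlockTriangular pidx := by
  intro p q hlt
  have hlex := pidx_lex hlt
  obtain ⟨⟨i, j⟩, hij⟩ := p
  obtain ⟨⟨r, s⟩, hrs⟩ := q
  have hij' : (i : ℕ) < j := hij
  have hrs' : (r : ℕ) < s := hrs
  simp only at hlex
  simp only [bialternateSum]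
  have t1 : (if (i : Fin n) = r then T j s else 0) = 0 := by
    split_ifs with h
    · have : (i : ℕ) = r := congrArg Fin.val h
      refine hT ?_
      show (s : Fin n) < j
      rw [Fin.lt_def]; omega
    · rfl
  have t2 : (if (j : Fin n) = s then T i r else 0) = 0 := by
    split_ifs with h
    · have : (j : ℕ) = s := congrArg Fin.val h
      refine hT ?_
      show (r : Fin n) < i
      rw [Fin.lt_def]; omega
    · rfl
  have t3 : (if (i : Fin n) = s then T j r else 0) = 0 := by
    split_ifs with h
    · have : (i : ℕ) = s := congrArg Fin.val h
      refine hT ?_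
      show (r : Fin n) < j
      rw [Fin.lt_def]; omega
    · rfl
  have t4 : (if (j : Fin n) = r then T i s else 0) = 0 := by
    split_ifs with h
    · have : (j : ℕ) = r := congrArg Fin.val h
      omega
    · rfl
  rw [t1, t2, t3, t4]; ring

lemma det_bialt_triangular (T : Matrix (Fin n) (Fin n) R) (hT : T.BlockTriangular id) :
    (bialternateSum T).det
      = ∏ p : {p : Fin n × Fin n // p.1 < p.2}, (T p.val.1 p.val.1 + T p.val.2 p.val.2) := by
  classical
  rw [(bialt_triangular T hT).det]
  rw [Finset.prod_image (fun x _ y _ h => pidx_inj h)]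
  refine Finset.prod_congr rfl fun p _ => ?_
  haveI hu : Unique {q : {p : Fin n × Fin n // p.1 < p.2} // pidx q = pidx p} :=
    ⟨⟨⟨p, rfl⟩⟩, fun q => Subtype.ext (pidx_inj q.2)⟩
  rw [Matrix.det_unique, ← hu.uniq ⟨p, rfl⟩]
  have hconv : (bialternateSum T).toSquareBlock pidx (pidx p)
      (⟨p, rfl⟩ : {q : {p : Fin n × Fin n // p.1 < p.2} // pidx q = pidx p}) ⟨p, rfl⟩
      = bialternateSum T p p := by
    rw [Matrix.toSquareBlock_def, Matrix.of_apply]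
  rw [hconv]
  obtain ⟨⟨i, j⟩, hij⟩ := p
  have : (i : Fin n) ≠ j := ne_of_lt hij
  simp only [bialternateSum, if_true]
  rw [if_neg this, if_neg (Ne.symm this)]
  ring

end Compound

lemma toMatrix'_mulVecLin {m : ℕ} (A : Matrix (Fin m) (Fin m) ℂ) :
    LinearMap.toMatrix' A.mulVecLin = A := by
  ext i j
  rw [LinearMap.toMatrix'_apply]
  simp only [Matrix.mulVecLin_apply, Pi.basisFun_apply]
  classical
  have hfun : (fun j' => if j' = j then (1:ℂ) else 0) = Pi.single j 1 := by
    ext j'; simp [Pi.single_apply]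
  rw [Matrix.mulVec_single]
  exact mul_one _

lemma exists_triangular : ∀ (m : ℕ) (A : Matrix (Fin m) (Fin m) ℂ),
    ∃ X Y T : Matrix (Fin m) (Fin m) ℂ, X * Y = 1 ∧ Y * X = 1 ∧ A = X * T * Y ∧
      T.BlockTriangular id ∧ T.charpoly = A.charpoly := by
  intro m
  induction m with
  | zero =>
      intro A
      exact ⟨1, 1, A, by simp, by simp, by simp, fun i j _ => i.elim0, rfl⟩
  | succ n IH =>
    intro A
    obtain ⟨μ, hμ⟩ := Module.End.exists_eigenvalue (A.mulVecLin : Module.End ℂ (Fin (n+1) → ℂ))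
    obtain ⟨v, hv⟩ := hμ.exists_hasEigenvector
    have hv0 : v ≠ 0 := hv.2
    have hAv : A.mulVecLin v = μ • v := Module.End.mem_eigenspace_iff.mp hv.1
    have hli : LinearIndepOn ℂ id ({v} : Set (Fin (n+1) → ℂ)) :=
      LinearIndepOn.singleton hv0
    let b0 := Module.Basis.extend hli
    haveI : Fintype (hli.extend (Set.subset_univ _)) := FiniteDimensional.fintypeBasisIndex b0
    have hcard : Fintype.card (hli.extend (Set.subset_univ _)) = n + 1 := by
      have h1 := Module.finrank_eq_card_basis b0
      have h2 : Module.finrank ℂ (Fin (n+1) → ℂ) = n + 1 := by simp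
      omega
    have hvmem : v ∈ hli.extend (Set.subset_univ _) := hli.subset_extend _ (Set.mem_singleton v)
    let e0 : Fin (n+1) ≃ hli.extend (Set.subset_univ _) := (Fintype.equivFinOfCardEq hcard).symm
    let e : Fin (n+1) ≃ hli.extend (Set.subset_univ _) :=
      (Equiv.swap (0 : Fin (n+1)) (e0.symm ⟨v, hvmem⟩)).trans e0
    let b := b0.reindex e.symm
    have hb0 : b 0 = v := by
      show b0.reindex e.symm 0 = v
      rw [Module.Basis.reindex_apply, Equiv.symm_symm]
      show b0 (e 0) = v
      have : e 0 = ⟨v, hvmem⟩ := by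
        show e0 ((Equiv.swap (0 : Fin (n+1)) (e0.symm ⟨v, hvmem⟩)) 0) = _
        rw [Equiv.swap_apply_left, Equiv.apply_symm_apply]
      rw [this]
      exact Module.Basis.extend_apply_self hli ⟨v, hvmem⟩
    set B := LinearMap.toMatrix b b A.mulVecLin with hBdef
    have hcol : ∀ j : Fin (n+1), j ≠ 0 → B j 0 = 0 := by
      intro j hj
      rw [hBdef, LinearMap.toMatrix_apply, hb0, hAv, _root_.map_smul, ← hb0, b.repr_self]
      rw [Finsupp.smul_apply, Finsupp.single_apply, if_neg (Ne.symm hj), smul_zero]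
    -- change of basis matrices
    set c := Pi.basisFun ℂ (Fin (n+1)) with hc
    set P := c.toMatrix ⇑b with hP
    set Q := b.toMatrix ⇑c with hQ
    have hPQ : P * Q = 1 := Module.Basis.toMatrix_mul_toMatrix_flip c b
    have hQP : Q * P = 1 := Module.Basis.toMatrix_mul_toMatrix_flip b c
    have hPBQ : P * B * Q = A := by
      rw [hP, hQ, hBdef, basis_toMatrix_mul_linearMap_toMatrix_mul_basis_toMatrix,
        LinearMap.toMatrix_eq_toMatrix', toMatrix'_mulVecLin]
    have hcpB : B.charpoly = A.charpoly := by
      rw [hBdef, LinearMap.charpoly_toMatrix]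
      conv_rhs => rw [← toMatrix'_mulVecLin A, ← LinearMap.toMatrix_eq_toMatrix']
      rw [LinearMap.charpoly_toMatrix]
    -- block decomposition
    let e1 : Fin 1 ⊕ Fin n ≃ Fin (n+1) := finSumFinEquiv.trans (finCongr (Nat.add_comm 1 n))
    have he1l : ∀ a : Fin 1, (e1 (Sum.inl a) : ℕ) = 0 := by
      intro a
      have ha : a = 0 := Subsingleton.elim a 0
      subst ha
      simp [e1]
    have he1r : ∀ a : Fin n, (e1 (Sum.inr a) : ℕ) = 1 + a := by
      intro a; simp [e1]; omega
    set C := B.submatrix e1 e1 with hCdef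
    have hC21 : C.toBlocks₂₁ = 0 := by
      ext i j
      have hj : j = 0 := Subsingleton.elim j 0
      subst hj
      show B (e1 (Sum.inr i)) (e1 (Sum.inl 0)) = 0
      have h0 : e1 (Sum.inl 0) = 0 := Fin.ext (he1l 0)
      rw [h0]
      refine hcol _ ?_
      intro hcontra
      have := he1r i
      rw [hcontra] at this
      simp only [Fin.val_zero] at this
      omega
    obtain ⟨X', Y', T', hXY', hYX', hA', hTri', hcp'⟩ := IH C.toBlocks₂₂
    -- assemble
    let lift : Matrix (Fin 1 ⊕ Fin n) (Fin 1 ⊕ Fin n) ℂ → Matrix (Fin (n+1)) (Fin (n+1)) ℂ :=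
      fun M => M.submatrix e1.symm e1.symm
    have lift_mul : ∀ M N, lift M * lift N = lift (M * N) := fun M N =>
      Matrix.submatrix_mul_equiv M N _ _ _
    have lift_one : lift 1 = 1 := Matrix.submatrix_one_equiv e1.symm
    have hBlift : B = lift (fromBlocks C.toBlocks₁₁ C.toBlocks₁₂ 0 C.toBlocks₂₂) := by
      rw [← hC21, Matrix.fromBlocks_toBlocks, hCdef]
      show B = (B.submatrix e1 e1).submatrix e1.symm e1.symm
      rw [Matrix.submatrix_submatrix]
      simp
    refine ⟨P * lift (fromBlocks 1 0 0 X'), lift (fromBlocks 1 0 0 Y') * Q,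
      lift (fromBlocks C.toBlocks₁₁ (C.toBlocks₁₂ * X') 0 T'), ?_, ?_, ?_, ?_, ?_⟩
    · rw [Matrix.mul_assoc, ← Matrix.mul_assoc (lift _), lift_mul]
      rw [Matrix.fromBlocks_multiply]
      simp only [Matrix.one_mul, Matrix.mul_zero, Matrix.zero_mul, Matrix.mul_one,
        add_zero, zero_add, hXY']
      rw [Matrix.fromBlocks_one, lift_one, Matrix.one_mul, hPQ]
    · rw [Matrix.mul_assoc, ← Matrix.mul_assoc Q, hQP, Matrix.one_mul, lift_mul]
      rw [Matrix.fromBlocks_multiply]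
      simp only [Matrix.one_mul, Matrix.mul_zero, Matrix.zero_mul, Matrix.mul_one,
        add_zero, zero_add, hYX']
      rw [Matrix.fromBlocks_one]
      exact lift_one
    · -- A = (P * lift X) * T * (lift Y * Q)
      have hblocks : lift (fromBlocks 1 0 0 X')
          * lift (fromBlocks C.toBlocks₁₁ (C.toBlocks₁₂ * X') 0 T')
          * lift (fromBlocks 1 0 0 Y')
          = lift (fromBlocks C.toBlocks₁₁ C.toBlocks₁₂ 0 C.toBlocks₂₂) := by
        rw [lift_mul, lift_mul, Matrix.fromBlocks_multiply, Matrix.fromBlocks_multiply]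
        simp only [Matrix.one_mul, Matrix.mul_zero, Matrix.zero_mul, Matrix.mul_one,
          add_zero, zero_add]
        have hD : C.toBlocks₁₂ * X' * Y' = C.toBlocks₁₂ := by
          rw [Matrix.mul_assoc, hXY', Matrix.mul_one]
        rw [hD, ← hA']
      rw [← hPBQ, hBlift, ← hblocks]
      simp only [Matrix.mul_assoc]
    · -- triangular
      intro i j hij
      show (fromBlocks C.toBlocks₁₁ (C.toBlocks₁₂ * X') 0 T') (e1.symm i) (e1.symm j) = 0
      have hi := e1.apply_symm_apply i
      have hj := e1.apply_symm_apply j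
      rcases hei : e1.symm i with a | a <;> rcases hej : e1.symm j with c | c
      · exfalso
        rw [hei] at hi; rw [hej] at hj
        have h1 := he1l a; have h2 := he1l c
        rw [hi] at h1; rw [hj] at h2
        have : (j : ℕ) < i := hij
        omega
      · exfalso
        rw [hei] at hi; rw [hej] at hj
        have h1 := he1l a; have h2 := he1r c
        rw [hi] at h1; rw [hj] at h2
        have : (j : ℕ) < i := hij
        omega
      · rfl
      · show T' a c = 0
        refine hTri' ?_
        rw [hei] at hi; rw [hej] at hj
        have h1 := he1r a; have h2 := he1r c
        rw [hi] at h1; rw [hj] at h2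
        have : (j : ℕ) < i := hij
        show (c : Fin n) < a
        rw [Fin.lt_def]; omega
    · -- charpoly
      have hre : ∀ M, (lift M).charpoly = M.charpoly := by
        intro M
        show ((Matrix.reindex e1 e1) M).charpoly = M.charpoly
        exact Matrix.charpoly_reindex e1 M
      rw [hre, Matrix.charpoly_fromBlocks_zero₂₁, hcp', ← Matrix.charpoly_fromBlocks_zero₂₁,
        ← hC21, Matrix.fromBlocks_toBlocks, hCdef]
      have : (B.submatrix e1 e1).charpoly = B.charpoly := by
        show ((Matrix.reindex e1.symm e1.symm) B).charpoly = B.charpoly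
        exact Matrix.charpoly_reindex e1.symm B
      rw [this, hcpB]

noncomputable def cLO : LinearOrder ℂ :=
  LinearOrder.lift' (fun z => toLex (z.re, z.im)) (by
    intro a b h
    have := toLex.injective h
    exact Complex.ext (congrArg Prod.fst this) (congrArg Prod.snd this))

lemma exists_perm_comp_eq {n : ℕ} {α : Type*} [LinearOrder α] {f g : Fin n → α}
    (h : Multiset.map f Finset.univ.val = Multiset.map g Finset.univ.val) :
    ∃ σ : Equiv.Perm (Fin n), f ∘ σ = g := by
  classical
  have huniv : ∀ (u : Fin n → α) (τ : Equiv.Perm (Fin n)),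
      Multiset.map (fun i => u (τ i)) Finset.univ.val = Multiset.map u Finset.univ.val := by
    intro u τ
    have : Finset.univ.val.map (⇑τ) = Finset.univ.val := by
      have := Finset.map_univ_equiv τ
      calc Finset.univ.val.map (⇑τ) = (Finset.univ.map τ.toEmbedding).val := rfl
        _ = Finset.univ.val := by rw [this]
    calc Multiset.map (fun i => u (τ i)) Finset.univ.val
        = Multiset.map u (Finset.univ.val.map (⇑τ)) := by rw [Multiset.map_map]; rfl
      _ = Multiset.map u Finset.univ.val := by rw [this]
  set σf := Tuple.sort f
  set σg := Tuple.sort g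
  have hmf : Monotone (f ∘ σf) := Tuple.monotone_sort f
  have hmg : Monotone (g ∘ σg) := Tuple.monotone_sort g
  have hms : Multiset.map (f ∘ σf) Finset.univ.val = Multiset.map (g ∘ σg) Finset.univ.val := by
    rw [show (f ∘ σf) = fun i => f (σf i) from rfl, huniv f σf,
      show (g ∘ σg) = fun i => g (σg i) from rfl, huniv g σg, h]
  -- translate to lists
  have hlist : List.ofFn (f ∘ σf) = List.ofFn (g ∘ σg) := by
    have hperm : List.Perm (List.ofFn (f ∘ σf)) (List.ofFn (g ∘ σg)) := by
      rw [← Multiset.coe_eq_coe]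
      have e1 : (↑(List.ofFn (f ∘ σf)) : Multiset α) = Multiset.map (f ∘ σf) Finset.univ.val := by
        rw [List.ofFn_eq_map, Fin.univ_def]; rfl
      have e2 : (↑(List.ofFn (g ∘ σg)) : Multiset α) = Multiset.map (g ∘ σg) Finset.univ.val := by
        rw [List.ofFn_eq_map, Fin.univ_def]; rfl
      rw [e1, e2, hms]
    exact hperm.eq_of_pairwise' hmf.sortedLE_ofFn.pairwise hmg.sortedLE_ofFn.pairwise
  have hfun : f ∘ σf = g ∘ σg := List.ofFn_injective hlist
  refine ⟨σg.symm.trans σf, ?_⟩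
  funext x
  have := congrFun hfun (σg.symm x)
  simpa using this

def pmk {n : ℕ} (σ : Equiv.Perm (Fin n)) (p : {p : Fin n × Fin n // p.1 < p.2}) :
    {p : Fin n × Fin n // p.1 < p.2} :=
  if h : σ p.val.1 < σ p.val.2 then ⟨(σ p.val.1, σ p.val.2), h⟩ else
    ⟨(σ p.val.2, σ p.val.1), by
      have hne : σ p.val.1 ≠ σ p.val.2 := σ.injective.ne (ne_of_lt p.2)
      exact lt_of_le_of_ne (not_lt.mp h) (Ne.symm hne)⟩

lemma pmk_pmk {n : ℕ} (σ : Equiv.Perm (Fin n)) (p : {p : Fin n × Fin n // p.1 < p.2}) :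
    pmk σ.symm (pmk σ p) = p := by
  obtain ⟨⟨a, c⟩, hac⟩ := p
  have hac' : a < c := hac
  simp only [pmk]
  split_ifs with h1 h2 h3
  · exact Subtype.ext (by simp)
  · exfalso; simp only [Equiv.symm_apply_apply] at h2; exact h2 hac'
  · exfalso; simp only [Equiv.symm_apply_apply] at h3
    exact absurd h3 (not_lt.mpr (le_of_lt hac'))
  · exact Subtype.ext (by simp)

lemma pmk_add {n : ℕ} (σ : Equiv.Perm (Fin n)) (f : Fin n → ℂ)
    (p : {p : Fin n × Fin n // p.1 < p.2}) :
    f (pmk σ p).val.1 + f (pmk σ p).val.2 = f (σ p.val.1) + f (σ p.val.2) := by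
  simp only [pmk]
  split_ifs with h1
  · rfl
  · exact add_comm _ _

lemma prod_pairs_perm {n : ℕ} (σ : Equiv.Perm (Fin n)) (f : Fin n → ℂ) :
    ∏ p : {p : Fin n × Fin n // p.1 < p.2}, (f (σ p.val.1) + f (σ p.val.2))
      = ∏ p : {p : Fin n × Fin n // p.1 < p.2}, (f p.val.1 + f p.val.2) := by
  refine Finset.prod_bij' (fun p _ => pmk σ p) (fun q _ => pmk σ.symm q)
    (fun _ _ => Finset.mem_univ _) (fun _ _ => Finset.mem_univ _)
    (fun p _ => pmk_pmk σ p) (fun q _ => by simpa using pmk_pmk σ.symm q)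
    (fun p _ => (pmk_add σ f p).symm)

theorem det_bialternateSum_eq_prod (n : ℕ) (hn : 2 ≤ n)
    (A : Matrix (Fin n) (Fin n) ℂ) (lam : Fin n → ℂ)
    (h : A.charpoly.roots = Multiset.map lam Finset.univ.val) :
    (bialternateSum A).det =
      ∏ p : {p : Fin n × Fin n // p.1 < p.2}, (lam p.val.1 + lam p.val.2) := by
  classical
  obtain ⟨X, Y, T, hXY, hYX, hA, hTri, hcp⟩ := exists_triangular n A
  have hdet : (bialternateSum A).det = (bialternateSum T).det := by
    rw [hA]; exact det_bialternateSum_conj X Y T hXY hYX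
  rw [hdet, det_bialt_triangular T hTri]
  set d : Fin n → ℂ := fun i => T i i with hd
  have hroots : T.charpoly.roots = Multiset.map d Finset.univ.val := by
    rw [Matrix.charpoly_of_upperTriangular T hTri]
    have heq : ∏ i : Fin n, (Polynomial.X - Polynomial.C (T i i))
        = ((Multiset.map d Finset.univ.val).map
            (fun a => Polynomial.X - Polynomial.C a)).prod := by
      rw [Multiset.map_map, Finset.prod_eq_multiset_prod]
      rfl
    rw [heq, Polynomial.roots_multiset_prod_X_sub_C]
  have hms : Multiset.map lam Finset.univ.val = Multiset.map d Finset.univ.val := by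
    rw [← h, ← hcp, hroots]
  letI : LinearOrder ℂ := cLO
  obtain ⟨σ, hσ⟩ := exists_perm_comp_eq hms
  have hdlam : ∀ i, d i = lam (σ i) := fun i => (congrFun hσ i).symm
  have hstep : ∏ p : {p : Fin n × Fin n // p.1 < p.2}, (T p.val.1 p.val.1 + T p.val.2 p.val.2)
      = ∏ p : {p : Fin n × Fin n // p.1 < p.2}, (lam (σ p.val.1) + lam (σ p.val.2)) := by
    refine Finset.prod_congr rfl fun p _ => ?_
    rw [show T p.val.1 p.val.1 = d p.val.1 from rfl, show T p.val.2 p.val.2 = d p.val.2 from rfl,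
      hdlam, hdlam]
  rw [hstep]
  exact prod_pairs_perm σ lam
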